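/- arXiv:1110.0078 — 2 statements merged into one kernel-verified Lean document; each statement's English description precedes it below -/
import Mathlib

section
/- There is an absolute constant C > 0 such that for every prime p, every integer k ≥ 1, and every real σ with 1/2 < σ ≤ 1: | log(∑_{a=0}^∞ d_k(p^a)² · p^{−2aσ}) − log I₀(2k/p^σ) | ≤ C·k/p^{2σ}. -/
open Finset Real

/-- `d_k(n)`: the number of ordered `k`-tuples of positive integers with product `n`. -/
def dk (k n : ℕ) : ℕ :=
  ((Fintype.piFinset fun _ : Fin k => Finset.Icc 1 n).filter fun f => ∏ i, f i = n).card
/-- The modified Bessel function `I₀(t) = ∑_{n≥0} t^{2n}/(2^{2n}(n!)²)`. -/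
noncomputable def besselI0 (t : ℝ) : ℝ :=
  ∑' n : ℕ, t ^ (2 * n) / (2 ^ (2 * n) * (Nat.factorial n) ^ 2)

/-- The constant `A = ∫₀² log I₀(t)/t² dt`. -/
noncomputable def constA : ℝ := ∫ t in (0 : ℝ)..2, Real.log (besselI0 t) / t ^ 2

-- KEY per-term identity for the telescoping proof of Li Shanlan's identity
lemma key_step (m n j : ℕ) (hj : j ≤ m) :
    ((n:ℝ)+1)^2 * ((m.choose j : ℝ))^2 * ((n+1+2*m-j).choose (2*m) : ℝ)
      + ((j:ℝ)+1)^2 * ((m.choose (j+1) : ℝ))^2 * ((n+2*m-j).choose (2*m) : ℝ)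
    = ((n:ℝ)+(m:ℝ)+1)^2 * ((m.choose j : ℝ))^2 * ((n+2*m-j).choose (2*m) : ℝ)
      + (j:ℝ)^2 * ((m.choose j : ℝ))^2 * ((n+1+2*m-j).choose (2*m) : ℝ) := by
  obtain ⟨r, rfl⟩ : ∃ r, m = j + r := ⟨m - j, by omega⟩
  have harg0 : n + 2*(j+r) - j = n + j + 2*r := by omega
  have harg1 : n + 1 + 2*(j+r) - j = n + j + 2*r + 1 := by omega
  rw [harg0, harg1]
  set Cj : ℝ := ((j+r).choose j : ℝ) with hCj
  set Cj1 : ℝ := ((j+r).choose (j+1) : ℝ) with hCj1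
  set D0 : ℝ := ((n + j + 2*r).choose (2*(j+r)) : ℝ) with hD0
  set D1 : ℝ := ((n + j + 2*r + 1).choose (2*(j+r)) : ℝ) with hD1
  have e1 : Cj1 * ((j:ℝ)+1) = Cj * r := by
    have := Nat.choose_succ_right_eq (j+r) j
    have h2 : j + r - j = r := by omega
    rw [h2] at this
    rw [hCj, hCj1]
    exact_mod_cast congrArg (Nat.cast : ℕ → ℝ) this
  rcases le_or_gt j (n+1) with hcase | hcase
  · have e2 : D0 * ((n:ℝ) + j + 2*r + 1) = D1 * ((n:ℝ) + 1 - j) := by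
      have := Nat.choose_mul_succ_eq (n + j + 2*r) (2*(j+r))
      have h2 : n + j + 2*r + 1 - 2*(j+r) = n + 1 - j := by omega
      rw [h2] at this
      have : ((n + j + 2*r).choose (2*(j+r)) * (n + j + 2*r + 1) : ℝ)
          = ((n + j + 2*r + 1).choose (2*(j+r)) : ℝ) * ((n + 1 - j : ℕ) : ℝ) := by
        exact_mod_cast congrArg (Nat.cast : ℕ → ℝ) this
      rw [hD0, hD1]
      rw [this]
      congr 1
      push_cast [Nat.cast_sub (by omega : j ≤ n + 1)]
      ring
    push_cast
    linear_combination (D0*(Cj1*((j:ℝ)+1) + Cj*(r:ℝ))) * e1 - (Cj^2*((n:ℝ)+1+j)) * e2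
  · have hD1z : D1 = 0 := by
      rw [hD1]
      norm_cast
      exact Nat.choose_eq_zero_of_lt (by omega)
    have hD0z : D0 = 0 := by
      rw [hD0]
      norm_cast
      exact Nat.choose_eq_zero_of_lt (by omega)
    rw [hD0z, hD1z]; ring

-- Li Shanlan's identity (range form)
lemma li_core (m : ℕ) : ∀ n : ℕ, ∑ j ∈ Finset.range (m+1),
    ((m.choose j : ℝ))^2 * ((n + 2*m - j).choose (2*m) : ℝ) = (((n+m).choose m : ℝ))^2 := by
  intro n
  induction n with
  | zero =>
    rw [Finset.sum_eq_single 0]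
    · simp
    · intro j hj hj0
      have : 0 + 2*m - j < 2*m := by
        simp only [Finset.mem_range] at hj
        omega
      rw [Nat.choose_eq_zero_of_lt this]
      simp
    · simp
  | succ n ih =>
    set f : ℕ → ℝ := fun i => (i:ℝ)^2 * ((m.choose i : ℝ))^2 * ((n+1+2*m-i).choose (2*m) : ℝ) with hf
    have tele : ∑ j ∈ Finset.range (m+1), (f (j+1) - f j) = f (m+1) - f 0 :=
      Finset.sum_range_sub f (m+1)
    have hfm : f (m+1) = 0 := by
      simp [hf, Nat.choose_eq_zero_of_lt (Nat.lt_succ_self m)]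
    have hf0 : f 0 = 0 := by simp [hf]
    have keysum : ∑ j ∈ Finset.range (m+1),
        (((n:ℝ)+1)^2 * ((m.choose j : ℝ))^2 * (((n+1) + 2*m - j).choose (2*m) : ℝ))
      = ∑ j ∈ Finset.range (m+1),
        (((n:ℝ)+(m:ℝ)+1)^2 * ((m.choose j : ℝ))^2 * ((n+2*m-j).choose (2*m) : ℝ)
          + (f j - f (j+1))) := by
      apply Finset.sum_congr rfl
      intro j hj
      simp only [Finset.mem_range] at hj
      have hjm : j ≤ m := by omega
      have harg : n + 1 + 2*m - (j+1) = n + 2*m - j := by omega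
      have hk := key_step m n j hjm
      have harg2 : (n+1) + 2*m - j = n + 1 + 2*m - j := by omega
      rw [harg2, hf]
      simp only [harg]
      push_cast
      nlinarith [hk]
    rw [Finset.sum_add_distrib] at keysum
    have e3 : ∑ j ∈ Finset.range (m+1),
        (((n:ℝ)+1)^2 * ((m.choose j : ℝ))^2 * (((n+1) + 2*m - j).choose (2*m) : ℝ))
        = ((n:ℝ)+1)^2 * ∑ j ∈ Finset.range (m+1),
          ((m.choose j : ℝ))^2 * (((n+1) + 2*m - j).choose (2*m) : ℝ) := by
      rw [Finset.mul_sum]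
      exact Finset.sum_congr rfl (fun j _ => by ring)
    have e4 : ∑ j ∈ Finset.range (m+1),
        (((n:ℝ)+(m:ℝ)+1)^2 * ((m.choose j : ℝ))^2 * ((n+2*m-j).choose (2*m) : ℝ))
        = ((n:ℝ)+(m:ℝ)+1)^2 * ∑ j ∈ Finset.range (m+1),
          ((m.choose j : ℝ))^2 * ((n+2*m-j).choose (2*m) : ℝ) := by
      rw [Finset.mul_sum]
      exact Finset.sum_congr rfl (fun j _ => by ring)
    rw [e3, e4, ih] at keysum
    have tele2 : ∑ j ∈ Finset.range (m+1), (f j - f (j+1)) = 0 := by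
      have : ∑ j ∈ Finset.range (m+1), (f j - f (j+1))
          = - ∑ j ∈ Finset.range (m+1), (f (j+1) - f j) := by
        rw [← Finset.sum_neg_distrib]
        apply Finset.sum_congr rfl
        intro j _
        ring
      rw [this, tele, hfm, hf0]
      ring
    rw [tele2, add_zero] at keysum
    have hchoose : ((n:ℝ)+(m:ℝ)+1) * (((n+m).choose m : ℝ)) = ((n:ℝ)+1) * (((n+1+m).choose m : ℝ)) := by
      have h1 := Nat.add_one_mul_choose_eq (n+m) m
      have h2 := Nat.choose_succ_right_eq (n+m+1) m
      have h3 : n + m + 1 - m = n + 1 := by omega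
      rw [h3] at h2
      have h1' : ((n+m+1) * (n+m).choose m : ℝ) = ((n+m+1).choose (m+1) * (m+1) : ℝ) := by
        exact_mod_cast congrArg (Nat.cast : ℕ → ℝ) h1
      have h2' : ((n+m+1).choose (m+1) * (m+1) : ℝ) = ((n+m+1).choose m * (n+1) : ℝ) := by
        exact_mod_cast congrArg (Nat.cast : ℕ → ℝ) h2
      have harg : n + 1 + m = n + m + 1 := by omega
      rw [harg]
      push_cast at h1' h2' ⊢
      linarith
    have hpos : ((n:ℝ)+1)^2 ≠ 0 := by positivity
    apply mul_left_cancel₀ hpos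
    rw [keysum]
    linear_combination (((n:ℝ)+(m:ℝ)+1) * (((n+m).choose m : ℝ)) + ((n:ℝ)+1) * (((n+1+m).choose m : ℝ))) * hchoose

lemma li_antidiag (m n : ℕ) :
    ∑ ab ∈ Finset.HasAntidiagonal.antidiagonal n, ((m.choose ab.1 : ℝ))^2 * ((2*m + ab.2).choose (2*m) : ℝ)
      = (((n+m).choose m : ℝ))^2 := by
  rw [Finset.Nat.sum_antidiagonal_eq_sum_range_succ_mk]
  have step1 : ∀ j ∈ Finset.range (n+1), ((m.choose j:ℝ))^2 * ((2*m + (n - j)).choose (2*m):ℝ)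
      = ((m.choose j:ℝ))^2 * ((n + 2*m - j).choose (2*m):ℝ) := by
    intro j hj; simp only [Finset.mem_range] at hj
    congr 3
    omega
  rw [Finset.sum_congr rfl step1]
  set g : ℕ → ℝ := fun j => ((m.choose j:ℝ))^2 * ((n + 2*m - j).choose (2*m):ℝ) with hg
  have h1 : ∑ j ∈ Finset.range (n+1), g j = ∑ j ∈ Finset.range (n+m+1), g j := by
    apply Finset.sum_subset
    · exact Finset.range_subset_range.2 (by omega)
    · intro j hjbig hjnot
      simp only [Finset.mem_range] at hjbig hjnot
      have : n + 2*m - j < 2*m := by omega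
      simp [hg, Nat.choose_eq_zero_of_lt this]
  have h2 : ∑ j ∈ Finset.range (m+1), g j = ∑ j ∈ Finset.range (n+m+1), g j := by
    apply Finset.sum_subset
    · exact Finset.range_subset_range.2 (by omega)
    · intro j hjbig hjnot
      simp only [Finset.mem_range] at hjbig hjnot
      simp [hg, Nat.choose_eq_zero_of_lt (show m < j by omega)]
  rw [h1, ← h2]
  exact li_core m n

lemma series_S {x : ℝ} (hx0 : 0 ≤ x) (hx1 : x < 1) (m : ℕ) :
    Summable (fun n : ℕ => (((n+m).choose m : ℝ))^2 * x^n) ∧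
    ∑' n : ℕ, (((n+m).choose m : ℝ))^2 * x^n
      = (∑ a ∈ Finset.range (m+1), ((m.choose a : ℝ))^2 * x^a) * (1/(1-x)^(2*m+1)) := by
  set f : ℕ → ℝ := fun a => ((m.choose a : ℝ))^2 * x^a with hfdef
  set g : ℕ → ℝ := fun b => ((2*m + b).choose (2*m) : ℝ) * x^b with hgdef
  have hxnorm : ‖x‖ < 1 := by rw [Real.norm_eq_abs, abs_of_nonneg hx0]; exact hx1
  have hf : HasSum f (∑ a ∈ Finset.range (m+1), f a) := by
    apply hasSum_sum_of_ne_finset_zero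
    intro a ha
    simp only [Finset.mem_range, not_lt] at ha
    simp [hfdef, Nat.choose_eq_zero_of_lt (show m < a by omega)]
  have hg : HasSum g (1/(1-x)^(2*m+1)) := by
    have := hasSum_choose_mul_geometric_of_norm_lt_one (2*m) hxnorm
    have e : g = fun n => ((n + 2*m).choose (2*m) : ℝ) * x^n := by
      funext b; simp only [hgdef, Nat.add_comm (2*m) b]
    rw [e]; exact this
  have hfn : Summable (fun a => ‖f a‖) := by
    apply Summable.congr hf.summable
    intro a
    rw [Real.norm_eq_abs, abs_of_nonneg (by positivity)]
  have hgn : Summable (fun b => ‖g b‖) := by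
    apply Summable.congr hg.summable
    intro b
    rw [Real.norm_eq_abs, abs_of_nonneg (by positivity)]
  have conv : ∀ n : ℕ, ∑ ab ∈ Finset.HasAntidiagonal.antidiagonal n, f ab.1 * g ab.2
      = (((n+m).choose m : ℝ))^2 * x^n := by
    intro n
    have : ∀ ab ∈ Finset.HasAntidiagonal.antidiagonal n, f ab.1 * g ab.2
        = (((m.choose ab.1 : ℝ))^2 * ((2*m + ab.2).choose (2*m) : ℝ)) * x^n := by
      intro ab hab
      rw [Finset.HasAntidiagonal.mem_antidiagonal] at hab
      simp only [hfdef, hgdef]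
      rw [show ((m.choose ab.1 : ℝ))^2 * x^ab.1 * (((2*m + ab.2).choose (2*m) : ℝ) * x^ab.2)
        = (((m.choose ab.1 : ℝ))^2 * ((2*m + ab.2).choose (2*m) : ℝ)) * (x^ab.1 * x^ab.2) by ring,
        ← pow_add, hab]
    rw [Finset.sum_congr rfl this, ← Finset.sum_mul, li_antidiag]
  have hsum : Summable (fun n : ℕ => ∑ ab ∈ Finset.HasAntidiagonal.antidiagonal n, f ab.1 * g ab.2) :=
    (summable_norm_sum_mul_antidiagonal_of_summable_norm hfn hgn).of_norm
  constructor
  · exact hsum.congr conv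
  · calc ∑' n : ℕ, (((n+m).choose m : ℝ))^2 * x^n
        = ∑' n : ℕ, ∑ ab ∈ Finset.HasAntidiagonal.antidiagonal n, f ab.1 * g ab.2 := by
          exact tsum_congr (fun n => (conv n).symm)
      _ = (∑' a, f a) * (∑' b, g b) :=
          (tsum_mul_tsum_eq_tsum_sum_antidiagonal_of_summable_norm hfn hgn).symm
      _ = (∑ a ∈ Finset.range (m+1), f a) * (1/(1-x)^(2*m+1)) := by
          rw [hf.tsum_eq, hg.tsum_eq]

lemma pow_factorization_eq {p a n : ℕ} (hp : p.Prime) (hn : n ∣ p ^ a) :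
    p ^ (n.factorization p) = n := by
  obtain ⟨c, hc, rfl⟩ := (Nat.dvd_prime_pow hp).1 hn
  rw [hp.factorization_pow, Finsupp.single_eq_same]

lemma dk_prime_pow {p : ℕ} (hp : p.Prime) (k a : ℕ) :
    dk k (p ^ a) = (k + a - 1).choose a := by
  have hcard : dk k (p ^ a) = (Finset.finAntidiagonal k a).card := by
    unfold dk
    apply Finset.card_bij' (fun f _ => fun i => (f i).factorization p)
      (fun e _ => fun i => p ^ e i)
    · intro f hf
      simp only [Finset.mem_filter, Fintype.mem_piFinset, Finset.mem_Icc] at hf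
      obtain ⟨hmem, hprod⟩ := hf
      have hdvd : ∀ i, f i ∣ p ^ a := by
        intro i
        rw [← hprod]
        exact Finset.dvd_prod_of_mem f (Finset.mem_univ i)
      rw [Finset.mem_finAntidiagonal]
      have : ∏ i, p ^ ((f i).factorization p) = p ^ a := by
        rw [Finset.prod_congr rfl (fun i _ => pow_factorization_eq hp (hdvd i))]
        exact hprod
      rw [Finset.prod_pow_eq_pow_sum] at this
      exact Nat.pow_right_injective hp.two_le this
    · intro e he
      rw [Finset.mem_finAntidiagonal] at he
      simp only [Finset.mem_filter, Fintype.mem_piFinset, Finset.mem_Icc]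
      constructor
      · intro i
        constructor
        · exact Nat.one_le_pow _ _ hp.pos
        · exact Nat.pow_le_pow_right hp.one_lt.le
            (he ▸ Finset.single_le_sum (fun i _ => Nat.zero_le _) (Finset.mem_univ i))
      · rw [Finset.prod_pow_eq_pow_sum, he]
    · intro f hf
      simp only [Finset.mem_filter, Fintype.mem_piFinset, Finset.mem_Icc] at hf
      obtain ⟨hmem, hprod⟩ := hf
      funext i
      exact pow_factorization_eq hp (hprod ▸ Finset.dvd_prod_of_mem f (Finset.mem_univ i))
    · intro e he
      funext i
      rw [hp.factorization_pow, Finsupp.single_eq_same]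
  rw [hcard]
  have h1 : (Finset.finAntidiagonal k a).card = Fintype.card (Sym (Fin k) a) := by
    rw [← Fintype.card_coe]
    apply Fintype.card_congr
    refine Equiv.trans ?_ (Sym.equivNatSumOfFintype (Fin k) a).symm
    exact Equiv.subtypeEquivRight (by simp [Finset.mem_finAntidiagonal])
  rw [h1, Sym.card_sym_eq_choose, Fintype.card_fin]

lemma dk_prime_pow' {p : ℕ} (hp : p.Prime) (m a : ℕ) :
    dk (m+1) (p ^ a) = (a + m).choose m := by
  rw [dk_prime_pow hp]
  have h1 : m + 1 + a - 1 = a + m := by omega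
  rw [h1]
  have := Nat.choose_symm (show m ≤ a + m by omega)
  simpa using this

lemma summable_J {c : ℝ} (hc : 0 ≤ c) : Summable (fun n : ℕ => c^n / ((n.factorial : ℝ))^2) := by
  apply Summable.of_nonneg_of_le (fun n => by positivity)
    (fun n => ?_) (Real.summable_pow_div_factorial c)
  have h1 : (0:ℝ) < (n.factorial : ℝ) := by exact_mod_cast n.factorial_pos
  have h2 : (n.factorial : ℝ) ≤ ((n.factorial : ℝ))^2 := by
    have : (1:ℝ) ≤ (n.factorial : ℝ) := by exact_mod_cast n.factorial_pos
    nlinarith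
  apply div_le_div_of_nonneg_left ?_ ?_ h2 |>.trans_eq rfl
  · positivity
  · positivity

lemma neglog_le {x : ℝ} (h0 : 0 ≤ x) (h2 : x ≤ 1/2) : -Real.log (1-x) ≤ 2*x := by
  have h1 : 0 < 1 - x := by linarith
  have hlog := Real.log_le_sub_one_of_pos (show 0 < (1-x)⁻¹ by positivity)
  rw [Real.log_inv] at hlog
  have hfrac : (1-x)⁻¹ - 1 = x / (1-x) := by field_simp; ring
  have hx2 : x / (1-x) ≤ 2*x := (div_le_iff₀ h1).2 (by nlinarith)
  linarith

lemma term_lower (m n : ℕ) : ((m:ℝ)+1)^n ≤ (((n+m).choose m : ℝ)) * (n.factorial : ℝ) := by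
  have h1 : (m+1)^n ≤ (m+1).ascFactorial n := Nat.pow_succ_le_ascFactorial (m+1) n
  have h2 : (m+1).ascFactorial n = n.factorial * (m+n).choose n :=
    Nat.ascFactorial_eq_factorial_mul_choose m n
  have h3 : (m+n).choose n = (n+m).choose m := by
    rw [Nat.add_comm m n]
    have := Nat.choose_symm (show m ≤ n + m by omega)
    simpa using this
  have : (m+1)^n ≤ n.factorial * ((n+m).choose m) := by rw [← h3, ← h2]; exact h1
  calc ((m:ℝ)+1)^n = (((m+1)^n : ℕ) : ℝ) := by push_cast; ring
    _ ≤ ((n.factorial * ((n+m).choose m) : ℕ) : ℝ) := by exact_mod_cast this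
    _ = (((n+m).choose m : ℝ)) * (n.factorial : ℝ) := by push_cast; ring

lemma term_upper (m a : ℕ) : ((m.choose a : ℝ)) * (a.factorial : ℝ) ≤ ((m:ℝ)+1)^a := by
  have h1 : m.descFactorial a = a.factorial * m.choose a :=
    Nat.descFactorial_eq_factorial_mul_choose m a
  have h2 : m.descFactorial a ≤ m^a := Nat.descFactorial_le_pow m a
  have h3 : a.factorial * m.choose a ≤ (m+1)^a :=
    (h1 ▸ h2).trans (Nat.pow_le_pow_left (by omega) a)
  calc ((m.choose a : ℝ)) * (a.factorial : ℝ) = ((a.factorial * m.choose a : ℕ) : ℝ) := by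
        push_cast; ring
    _ ≤ (((m+1)^a : ℕ) : ℝ) := by exact_mod_cast h3
    _ = ((m:ℝ)+1)^a := by push_cast; ring

theorem divisor_sum_bessel :
    ∃ C : ℝ, 0 < C ∧ ∀ p : ℕ, p.Prime → ∀ k : ℕ, 1 ≤ k → ∀ σ : ℝ, 1 / 2 < σ → σ ≤ 1 →
      |Real.log (∑' a : ℕ, (dk k (p ^ a) : ℝ) ^ 2 / (p : ℝ) ^ (2 * (a : ℝ) * σ)) -
          Real.log (besselI0 (2 * k / (p : ℝ) ^ σ))| ≤ C * k / (p : ℝ) ^ (2 * σ) := by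
  refine ⟨4, by norm_num, ?_⟩
  intro p hp k hk σ hσ1 hσ2
  obtain ⟨m, rfl⟩ : ∃ m, k = m + 1 := ⟨k - 1, by omega⟩
  set X : ℝ := (p:ℝ) ^ (2*σ) with hX
  have hp2 : (2:ℝ) ≤ (p:ℝ) := by exact_mod_cast hp.two_le
  have hp0 : (0:ℝ) < p := by linarith
  have hp1 : (1:ℝ) ≤ p := by linarith
  have hX2 : (2:ℝ) ≤ X := by
    have h1 : (p:ℝ)^(1:ℝ) ≤ (p:ℝ)^(2*σ) :=
      Real.rpow_le_rpow_of_exponent_le hp1 (by linarith)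
    rw [Real.rpow_one] at h1; linarith
  have hX0 : (0:ℝ) < X := by linarith
  set x : ℝ := X⁻¹ with hx
  have hx0 : (0:ℝ) ≤ x := by positivity
  have hxhalf : x ≤ 1/2 := by
    rw [hx, show (1:ℝ)/2 = 2⁻¹ by norm_num]
    exact inv_anti₀ (by norm_num) hX2
  have hx1 : x < 1 := by linarith
  have hXpow : ∀ a : ℕ, (p:ℝ) ^ (2*(a:ℝ)*σ) = X ^ a := by
    intro a
    rw [hX, ← Real.rpow_natCast ((p:ℝ)^(2*σ)) a, ← Real.rpow_mul (le_of_lt hp0)]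
    congr 1; ring
  have hterm : ∀ a : ℕ, (dk (m+1) (p^a) : ℝ)^2 / (p:ℝ)^(2*(a:ℝ)*σ)
      = (((a+m).choose m : ℝ))^2 * x^a := by
    intro a
    rw [dk_prime_pow' hp m a, hXpow a, div_eq_mul_inv, hx, ← inv_pow]
  have hSsum := (series_S hx0 hx1 m).1
  have hSeq := (series_S hx0 hx1 m).2
  set c : ℝ := ((m:ℝ)+1)^2 * x with hc
  have hc0 : (0:ℝ) ≤ c := by positivity
  have hJsum : Summable (fun n : ℕ => c^n / ((n.factorial:ℝ))^2) := summable_J hc0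
  have hbessel : besselI0 (2*((m:ℕ)+1:ℝ) / (p:ℝ)^σ) = ∑' n : ℕ, c^n / ((n.factorial:ℝ))^2 := by
    unfold besselI0
    apply tsum_congr; intro n
    have hps : (0:ℝ) < (p:ℝ)^σ := Real.rpow_pos_of_pos hp0 σ
    have hsq : ((p:ℝ)^σ)^(2:ℕ) = X := by
      rw [hX, ← Real.rpow_natCast ((p:ℝ)^σ) 2, ← Real.rpow_mul (le_of_lt hp0)]
      congr 1; ring
    have ht2 : (2*((m:ℕ)+1:ℝ) / (p:ℝ)^σ)^(2:ℕ) = 4 * c := by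
      rw [div_pow, hsq, hc, hx]
      field_simp
      ring
    rw [pow_mul, ht2, pow_mul]
    have h4 : ((2:ℝ)^(2:ℕ)) = 4 := by norm_num
    rw [h4, mul_pow]
    have h4n : (0:ℝ) < (4:ℝ)^n := by positivity
    rw [mul_div_mul_left _ _ (ne_of_gt h4n)]
  have hlow : ∀ n : ℕ, c^n / ((n.factorial:ℝ))^2 ≤ (((n+m).choose m : ℝ))^2 * x^n := by
    intro n
    have h1 := term_lower m n
    have hf0 : (0:ℝ) < (n.factorial : ℝ) := by exact_mod_cast n.factorial_pos
    have key : ((m:ℝ)+1)^n / (n.factorial:ℝ) ≤ ((n+m).choose m : ℝ) := (div_le_iff₀ hf0).2 h1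
    have heq : c^n / ((n.factorial:ℝ))^2 = (((m:ℝ)+1)^n / (n.factorial:ℝ))^2 * x^n := by
      rw [hc, mul_pow, pow_right_comm, div_pow]
      ring
    rw [heq]
    apply mul_le_mul_of_nonneg_right _ (by positivity)
    apply pow_le_pow_left₀ (by positivity) key
  have hup : ∀ a : ℕ, ((m.choose a : ℝ))^2 * x^a ≤ c^a / ((a.factorial:ℝ))^2 := by
    intro a
    have h1 := term_upper m a
    have hf0 : (0:ℝ) < (a.factorial : ℝ) := by exact_mod_cast a.factorial_pos
    have key : ((m.choose a : ℝ)) ≤ ((m:ℝ)+1)^a / (a.factorial:ℝ) := by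
      rw [le_div_iff₀ hf0]; exact h1
    have heq : c^a / ((a.factorial:ℝ))^2 = (((m:ℝ)+1)^a / (a.factorial:ℝ))^2 * x^a := by
      rw [hc, mul_pow, pow_right_comm, div_pow]
      ring
    rw [heq]
    apply mul_le_mul_of_nonneg_right _ (by positivity)
    apply pow_le_pow_left₀ (by positivity) key
  have hJ1 : (1:ℝ) ≤ ∑' n : ℕ, c^n / ((n.factorial:ℝ))^2 := by
    have h0 : c^0/((Nat.factorial 0:ℝ))^2 = 1 := by norm_num
    have := Summable.le_tsum hJsum 0 (fun j _ => by positivity)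
    rw [h0] at this
    exact this
  have hJS : (∑' n : ℕ, c^n / ((n.factorial:ℝ))^2)
      ≤ ∑' n : ℕ, (((n+m).choose m : ℝ))^2 * x^n := Summable.tsum_le_tsum hlow hJsum hSsum
  have hfQ : HasSum (fun a : ℕ => ((m.choose a : ℝ))^2 * x^a)
      (∑ a ∈ Finset.range (m+1), ((m.choose a : ℝ))^2 * x^a) := by
    apply hasSum_sum_of_ne_finset_zero
    intro a ha
    simp only [Finset.mem_range, not_lt] at ha
    simp [Nat.choose_eq_zero_of_lt (show m < a by omega)]
  have hQJ : (∑ a ∈ Finset.range (m+1), ((m.choose a : ℝ))^2 * x^a)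
      ≤ ∑' n : ℕ, c^n / ((n.factorial:ℝ))^2 := by
    rw [← hfQ.tsum_eq]
    exact Summable.tsum_le_tsum hup hfQ.summable hJsum
  have hfrac0 : (0:ℝ) < 1 - x := by linarith
  have hpow0 : (0:ℝ) < (1-x)^(2*m+1) := by positivity
  have hSle : (∑' n : ℕ, (((n+m).choose m : ℝ))^2 * x^n)
      ≤ (∑' n : ℕ, c^n / ((n.factorial:ℝ))^2) * (1/(1-x)^(2*m+1)) := by
    rw [hSeq]
    exact mul_le_mul_of_nonneg_right hQJ (by positivity)
  have hJ0 : (0:ℝ) < ∑' n : ℕ, c^n / ((n.factorial:ℝ))^2 := by linarith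
  have hS0 : (0:ℝ) < ∑' n : ℕ, (((n+m).choose m : ℝ))^2 * x^n := by linarith
  have hlog1 : Real.log (∑' n : ℕ, c^n / ((n.factorial:ℝ))^2)
      ≤ Real.log (∑' n : ℕ, (((n+m).choose m : ℝ))^2 * x^n) := Real.log_le_log hJ0 hJS
  have hlog2 : Real.log (∑' n : ℕ, (((n+m).choose m : ℝ))^2 * x^n)
      ≤ Real.log (∑' n : ℕ, c^n / ((n.factorial:ℝ))^2) + (2*(m:ℝ)+1) * (-(Real.log (1-x))) := by
    have h1 := Real.log_le_log hS0 hSle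
    rw [Real.log_mul (ne_of_gt hJ0) (by positivity), one_div, Real.log_inv, Real.log_pow] at h1
    push_cast at h1
    linarith
  have hbound : (2*(m:ℝ)+1) * (-(Real.log (1-x))) ≤ 4*((m:ℝ)+1)*x := by
    have hneg := neglog_le hx0 hxhalf
    have hnn : (0:ℝ) ≤ -(Real.log (1-x)) := by
      have : Real.log (1-x) ≤ 0 := Real.log_nonpos (by linarith) (by linarith)
      linarith
    nlinarith
  have hA : (∑' a : ℕ, (dk (m+1) (p ^ a) : ℝ) ^ 2 / (p : ℝ) ^ (2 * (a : ℝ) * σ))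
      = ∑' n : ℕ, (((n+m).choose m : ℝ))^2 * x^n := tsum_congr hterm
  have hBarg : (2 * ((m+1 : ℕ):ℝ) / (p : ℝ) ^ σ) = (2*((m:ℕ)+1:ℝ) / (p:ℝ)^σ) := by push_cast; ring
  rw [hA, hBarg, hbessel]
  rw [abs_of_nonneg (by linarith)]
  push_cast
  have hfin : 4*((m:ℝ)+1)/X = 4*((m:ℝ)+1)*x := by
    rw [hx, div_eq_mul_inv]
  linarith
end

section
/- For every integer q ≥ 2 and every primitive nonprincipal Dirichlet character χ modulo q: max_{1 ≤ t ≤ q} | ∑_{n ≤ t} χ(n) | ≥ √q/(2π), the maximum taken over integers t. -/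
open Finset Real

lemma aux_exp_bound (θ : ℝ) (hθ : 0 ≤ θ) :
    ‖Complex.exp (θ * Complex.I) - 1‖ ≤ θ := by
  have h1 : Complex.normSq (Complex.exp (θ * Complex.I) - 1) = 2 - 2 * Real.cos θ := by
    rw [Complex.normSq_apply]
    simp [Complex.exp_ofReal_mul_I_re, Complex.exp_ofReal_mul_I_im]
    nlinarith [Real.sin_sq_add_cos_sq θ]
  have h2 : 2 - 2 * Real.cos θ ≤ θ ^ 2 := by
    nlinarith [Real.one_sub_sq_div_two_le_cos (x := θ)]
  have h3 := Real.sqrt_le_sqrt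
    (show Complex.normSq (Complex.exp (θ * Complex.I) - 1) ≤ θ ^ 2 by rw [h1]; exact h2)
  rw [Real.sqrt_sq hθ] at h3
  rw [Complex.norm_def]
  exact h3

lemma aux_conj_stdAddChar {q : ℕ} [NeZero q] (a : ZMod q) :
    (starRingEnd ℂ) (ZMod.stdAddChar a) = ZMod.stdAddChar (-a) := by
  rw [ZMod.stdAddChar_apply, ZMod.stdAddChar_apply, AddChar.map_neg_eq_inv]
  exact_mod_cast (Circle.coe_inv_eq_conj _).symm

lemma aux_norm_stdAddChar {q : ℕ} [NeZero q] (a : ZMod q) :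
    ‖ZMod.stdAddChar a‖ = 1 := by
  rw [ZMod.stdAddChar_apply, Circle.norm_coe]

lemma aux_norm_gaussSum {q : ℕ} [NeZero q] (χ : DirichletCharacter ℂ q)
    (hχ : χ.IsPrimitive) : ‖gaussSum χ ZMod.stdAddChar‖ = Real.sqrt q := by
  set τ := gaussSum χ ZMod.stdAddChar with hτ
  have key : (starRingEnd ℂ) τ * τ = (q : ℂ) := by
    have h2 : ZMod.dft (ZMod.dft ⇑χ) (-1) = (q : ℂ) := by
      rw [ZMod.dft_dft]
      simp
    have h3 : ZMod.dft (ZMod.dft ⇑χ) (-1)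
        = (∑ k : ZMod q, ZMod.stdAddChar k * χ⁻¹ (-k)) * τ := by
      rw [ZMod.dft_apply, Finset.sum_mul]
      refine Finset.sum_congr rfl fun k _ => ?_
      rw [hχ.fourierTransform_eq_inv_mul_gaussSum]
      simp [mul_assoc, hτ]
    have h4 : (starRingEnd ℂ) τ = ∑ k : ZMod q, ZMod.stdAddChar k * χ⁻¹ (-k) := by
      rw [hτ, gaussSum, map_sum]
      refine Fintype.sum_equiv (Equiv.neg (ZMod q)) _ _ fun k => ?_
      simp only [Equiv.neg_apply, map_mul]
      rw [aux_conj_stdAddChar, neg_neg, mul_comm]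
      congr 1
      exact MulChar.star_apply' χ k
    rw [← h2, h3, h4]
  have : (Complex.normSq τ : ℂ) = (q : ℂ) := by
    rw [Complex.normSq_eq_conj_mul_self]; exact key
  have hsq : Complex.normSq τ = q := by exact_mod_cast this
  rw [Complex.norm_def, hsq]

lemma aux_sum_zmod {q : ℕ} [NeZero q] (hq : 2 ≤ q) (f : ZMod q → ℂ) :
    ∑ n ∈ Finset.Ioc 0 q, f (n : ZMod q) = ∑ a : ZMod q, f a := by
  refine Finset.sum_nbij' (fun n => (n : ZMod q))
    (fun a => if a.val = 0 then q else a.val) ?_ ?_ ?_ ?_ ?_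
  · intro n _; exact Finset.mem_univ _
  · intro a _
    by_cases h : a.val = 0 <;> simp only [h, if_pos, if_neg]
    · simp [Finset.mem_Ioc]; omega
    · have := a.val_lt
      simp only [Finset.mem_Ioc, h, ite_false, if_false, not_false_eq_true, if_neg]
      omega
  · intro n hn
    rw [Finset.mem_Ioc] at hn
    rcases eq_or_lt_of_le hn.2 with h | h
    · subst h
      simp [ZMod.natCast_self]
    · rw [ZMod.val_natCast_of_lt h]
      have : n ≠ 0 := by omega
      simp [this]
  · intro a _
    by_cases h : a.val = 0 <;> simp only [h, if_pos, if_neg]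
    · rw [ZMod.natCast_self]
      exact ((ZMod.val_eq_zero a).mp h).symm
    · exact ZMod.natCast_zmod_val a
  · intro n _; rfl

/-- `S_χ(t) = ∑_{n ≤ t} χ(n)` for integer `t`. -/
noncomputable def charSum {q : ℕ} (χ : DirichletCharacter ℂ q) (t : ℕ) : ℂ :=
  ∑ n ∈ Finset.Icc 1 t, χ n

/-- `M(χ) = max_{1 ≤ t ≤ q} |S_χ(t)|`. -/
noncomputable def Mmax {q : ℕ} (χ : DirichletCharacter ℂ q) : ℝ :=
  (((Finset.Icc 1 q).sup fun t => ‖charSum χ t‖₊ : NNReal) : ℝ)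

theorem Mmax_lower_bound_primitive :
    ∀ q : ℕ, 2 ≤ q → ∀ χ : DirichletCharacter ℂ q, χ.IsPrimitive → χ ≠ 1 →
      Real.sqrt q / (2 * Real.pi) ≤ Mmax χ := by
  intro q hq χ hprim hne
  haveI : NeZero q := ⟨by omega⟩
  haveI : Fact (1 < q) := ⟨by omega⟩
  set M : ℝ := Mmax χ with hM
  have hM0 : (0:ℝ) ≤ M := NNReal.coe_nonneg _
  have hπ := Real.pi_pos
  have hχ0 : χ (0 : ZMod q) = 0 := χ.map_nonunit not_isUnit_zero
  have hG : ∀ n : ℕ, (∑ i ∈ Finset.range (n+1), χ ((i:ℕ) : ZMod q)) = charSum χ n := by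
    intro n
    rw [Finset.range_eq_Ico, Finset.sum_eq_sum_Ico_succ_bot (Nat.succ_pos n), Nat.cast_zero, hχ0, zero_add,
      charSum, Nat.succ_eq_add_one, Finset.Ico_add_one_right_eq_Icc]
  have hSq : charSum χ q = 0 := by
    rw [charSum, show Finset.Icc 1 q = Finset.Ioc 0 q from Finset.Icc_add_one_left_eq_Ioc 0 q,
      aux_sum_zmod hq]
    exact MulChar.sum_eq_zero_of_ne_one hne
  set ψ : ℕ → ℂ := fun n => ZMod.stdAddChar ((n : ℕ) : ZMod q) with hψ
  have hτeq : gaussSum χ ZMod.stdAddChar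
      = ∑ i ∈ Finset.Ioc 0 q, ψ i • χ ((i:ℕ) : ZMod q) := by
    rw [gaussSum, ← aux_sum_zmod hq (fun a => χ a * ZMod.stdAddChar a)]
    exact Finset.sum_congr rfl fun i _ => (mul_comm _ _)
  have habel := Finset.sum_Ioc_by_parts ψ (fun n => χ ((n:ℕ) : ZMod q))
    (show (0:ℕ) < q by omega)
  rw [← hτeq] at habel
  have hτ2 : gaussSum χ ZMod.stdAddChar
      = - ∑ i ∈ Finset.Ioc 0 (q-1), (ψ (i+1) - ψ i) * charSum χ i := by
    rw [habel]
    simp only [smul_eq_mul]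
    rw [hG q, hSq, mul_zero]
    have h01 : (∑ i ∈ Finset.range (0+1), χ ((i:ℕ) : ZMod q)) = 0 := by
      simp [hχ0]
    rw [h01, mul_zero]
    simp only [neg_zero, zero_sub, sub_zero, neg_inj]
    exact Finset.sum_congr rfl fun i _ => by rw [hG i]
  have hψdiff : ∀ i : ℕ, ‖ψ (i+1) - ψ i‖ ≤ 2 * π / q := by
    intro i
    have h1 : ψ (i+1) = ψ i * ψ 1 := by
      simp only [hψ]
      push_cast
      rw [AddChar.map_add_eq_mul]
    have h2 : ψ (i+1) - ψ i = ψ i * (ψ 1 - 1) := by rw [h1]; ring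
    rw [h2, norm_mul, aux_norm_stdAddChar, one_mul]
    have h3 : ψ 1 = Complex.exp ((2 * π / q : ℝ) * Complex.I) := by
      simp only [hψ]
      have h4 := ZMod.stdAddChar_coe (N := q) 1
      push_cast at h4
      rw [Nat.cast_one, h4]
      congr 1
      push_cast
      ring
    rw [h3]
    exact aux_exp_bound _ (by positivity)
  have hcs : ∀ i ∈ Finset.Ioc 0 (q-1), ‖charSum χ i‖ ≤ M := by
    intro i hi
    rw [Finset.mem_Ioc] at hi
    have hmem : i ∈ Finset.Icc 1 q := by rw [Finset.mem_Icc]; omega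
    have h5 := Finset.le_sup (f := fun t => ‖charSum χ t‖₊) hmem
    rw [hM, Mmax]
    exact_mod_cast h5
  have hbound : ‖gaussSum χ ZMod.stdAddChar‖ ≤ ((q-1 : ℕ) : ℝ) * (2 * π / q * M) := by
    rw [hτ2, norm_neg]
    refine le_trans (norm_sum_le _ _) ?_
    have hcard : (Finset.Ioc 0 (q-1)).card = q - 1 := by
      rw [Nat.card_Ioc]; omega
    calc ∑ i ∈ Finset.Ioc 0 (q-1), ‖(ψ (i+1) - ψ i) * charSum χ i‖
        ≤ ∑ i ∈ Finset.Ioc 0 (q-1), 2 * π / q * M := by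
          refine Finset.sum_le_sum fun i hi => ?_
          rw [norm_mul]
          exact mul_le_mul (hψdiff i) (hcs i hi) (norm_nonneg _) (by positivity)
      _ = ((q-1 : ℕ) : ℝ) * (2 * π / q * M) := by
          rw [Finset.sum_const, hcard, nsmul_eq_mul]
  have hgauss := aux_norm_gaussSum χ hprim
  have hfinal : Real.sqrt q ≤ 2 * π * M := by
    rw [← hgauss]
    refine hbound.trans ?_
    have hq0 : (0:ℝ) < q := by positivity
    have hle : ((q-1:ℕ):ℝ) ≤ (q:ℝ) := Nat.cast_le.mpr (Nat.sub_le q 1)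
    calc ((q-1:ℕ):ℝ) * (2 * π / q * M) ≤ (q:ℝ) * (2 * π / q * M) :=
          mul_le_mul_of_nonneg_right hle (by positivity)
      _ = 2 * π * M := by field_simp
  rw [div_le_iff₀ (by positivity)]
  linarith
end
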